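/- The gap composition rule is transitive in the appropriate sense: in any instance of ST-Realizability, if (a,b) is realizable with gap (c,d) and (c,d) is realizable with gap (e,f), then (a,b) is realizable with gap (e,f). -/
import Mathlib


inductive Alph (k : ℕ) where
  | push : Alph k
  | pop : Alph k
  | eps : Alph k
  | alpha : Fin k → Alph k
deriving DecidableEq

inductive Realizable {k : ℕ} : List (Alph k) → Prop
  | single (i : Fin k) : Realizable [Alph.alpha i]
  | base (i : Fin k) : Realizable [Alph.alpha i, Alph.eps, Alph.alpha i]
  | wrap (i : Fin k) {S : List (Alph k)} (h : Realizable S) :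
      Realizable ([Alph.alpha i, Alph.push] ++ S ++ [Alph.pop, Alph.alpha i])
  | concat (i : Fin k) {S₁ S₂ : List (Alph k)}
      (h₁ : Realizable ([Alph.alpha i] ++ S₁ ++ [Alph.alpha i]))
      (h₂ : Realizable ([Alph.alpha i] ++ S₂ ++ [Alph.alpha i])) :
      Realizable ([Alph.alpha i] ++ S₁ ++ [Alph.alpha i] ++ S₂ ++ [Alph.alpha i])

theorem split_mid {α : Type*} {X Y U B : List α} {x : α}
    (h : X ++ Y = U ++ x :: B) :
    (∃ B₀, X = U ++ x :: B₀ ∧ B = B₀ ++ Y) ∨ (∃ U₀, U = X ++ U₀ ∧ Y = U₀ ++ x :: B) := by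
  rcases List.append_eq_append_iff.mp h with ⟨a', ha1, ha2⟩ | ⟨c', hc1, hc2⟩
  · exact Or.inr ⟨a', ha1, ha2⟩
  · cases c' with
    | nil => exact Or.inr ⟨[], by simp [hc1], by simpa using hc2.symm⟩
    | cons z c'' =>
      obtain ⟨rfl, rfl⟩ : x = z ∧ B = c'' ++ Y := by simpa using hc2
      exact Or.inl ⟨c'', hc1, rfl⟩

/-- A realizable loop at `α j` can be spliced in at any occurrence of `α j`
inside a realizable string. -/
theorem realizable_insert {k : ℕ} {j : Fin k} {M : List (Alph k)}
    (hM : Realizable (Alph.alpha j :: (M ++ [Alph.alpha j]))) :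
    ∀ {S : List (Alph k)}, Realizable S → ∀ U B, S = U ++ Alph.alpha j :: B →
      Realizable (U ++ Alph.alpha j :: (M ++ Alph.alpha j :: B)) := by
  have hM' : Realizable ([Alph.alpha j] ++ M ++ [Alph.alpha j]) := by simpa using hM
  intro S hS
  induction hS with
  | single i =>
    intro U B h
    cases U with
    | nil =>
      obtain ⟨he, hB⟩ : Alph.alpha i = Alph.alpha j ∧ [] = B := by simpa using h
      obtain rfl : i = j := by simpa using he
      subst hB
      simpa using hM
    | cons u U' => exfalso; simp_all
  | base i =>
    intro U B h
    cases U with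
    | nil =>
      obtain ⟨he, hB⟩ : Alph.alpha i = Alph.alpha j ∧ [Alph.eps, Alph.alpha i] = B := by
        simpa using h
      obtain rfl : i = j := by simpa using he
      subst hB
      have := Realizable.concat i (S₂ := [Alph.eps]) hM' (Realizable.base i)
      simpa using this
    | cons u U' =>
      cases U' with
      | nil => exfalso; simp_all
      | cons v U'' =>
        cases U'' with
        | nil =>
          obtain ⟨hu, hv, he, hB⟩ :
              Alph.alpha i = u ∧ Alph.eps = v ∧ Alph.alpha i = Alph.alpha j ∧ [] = B := by
            simpa using h
          obtain rfl : i = j := by simpa using he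
          subst hu; subst hv; subst hB
          have := Realizable.concat i (S₁ := [Alph.eps]) (Realizable.base i) hM'
          simpa using this
        | cons w U''' => exfalso; simp_all
  | wrap i hS ih =>
    intro U B h
    rename_i S'
    have hwrap : Realizable ([Alph.alpha i] ++ (Alph.push :: (S' ++ [Alph.pop])) ++ [Alph.alpha i]) := by
      simpa using Realizable.wrap i hS
    rcases split_mid (X := [Alph.alpha i, Alph.push]) (by simpa using h) with
      ⟨B₀, h1, hB⟩ | ⟨U₀, hU, h2⟩
    · -- the occurrence is among the first two letters
      cases U with
      | nil =>
        obtain ⟨he, hB₀⟩ : Alph.alpha i = Alph.alpha j ∧ [Alph.push] = B₀ := by simpa using h1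
        obtain rfl : i = j := by simpa using he
        subst hB₀; subst hB
        have := Realizable.concat i hM' hwrap
        simpa using this
      | cons u U' =>
        exfalso
        cases U' with
        | nil => simp_all
        | cons v U'' => simp_all
    · subst hU
      rcases split_mid (X := S') (by simpa using h2) with
        ⟨B₀, h3, hB⟩ | ⟨U₁, hU₁, h4⟩
    
      · subst hB
        have := Realizable.wrap i (ih U₀ B₀ h3)
        simpa using this
      · -- the occurrence is among the last two letters
        subst hU₁
        cases U₁ with
        | nil => exfalso; simp_all
        | cons u U₂ =>
          cases U₂ with
          | nil =>
            obtain ⟨hu, he, hB⟩ : Alph.pop = u ∧ Alph.alpha i = Alph.alpha j ∧ [] = B := by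
              simpa using h4
            obtain rfl : i = j := by simpa using he
            subst hu; subst hB
            have := Realizable.concat i hwrap hM'
            simpa using this
          | cons v U₃ => exfalso; simp_all
  | concat i h1 h2 ih1 ih2 =>
    intro U B h
    rename_i S₁ S₂
    rcases split_mid (X := Alph.alpha i :: S₁) (Y := Alph.alpha i :: (S₂ ++ [Alph.alpha i]))
      (by simpa using h) with ⟨B₀, hx, hB⟩ | ⟨U₀, hU, hy⟩
    · -- occurrence inside the first part
      subst hB
      have hfirst : [Alph.alpha i] ++ S₁ ++ [Alph.alpha i]
          = U ++ Alph.alpha j :: (B₀ ++ [Alph.alpha i]) := by simp [hx]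
      have hr := ih1 U (B₀ ++ [Alph.alpha i]) hfirst
      cases U with
      | nil =>
        obtain ⟨he, hS1⟩ : Alph.alpha i = Alph.alpha j ∧ S₁ = B₀ := by simpa using hx
        obtain rfl : i = j := by simpa using he
        have hr' : Realizable ([Alph.alpha i] ++ (M ++ Alph.alpha i :: B₀) ++ [Alph.alpha i]) := by
          simpa using hr
        have := Realizable.concat i hr' h2
        simpa using this
      | cons u U' =>
        obtain ⟨hu, hS1⟩ : Alph.alpha i = u ∧ S₁ = U' ++ Alph.alpha j :: B₀ := by simpa using hx
        subst hu
        have hr' : Realizable ([Alph.alpha i] ++ (U' ++ Alph.alpha j :: (M ++ Alph.alpha j :: B₀)) ++ [Alph.alpha i]) := by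
          simpa using hr
        have := Realizable.concat i hr' h2
        simpa using this
    · -- occurrence inside the second part
      subst hU
      have hsecond : [Alph.alpha i] ++ S₂ ++ [Alph.alpha i] = U₀ ++ Alph.alpha j :: B := by
        simpa using hy
      have hr := ih2 U₀ B hsecond
      cases U₀ with
      | nil =>
        obtain ⟨he, hB⟩ : Alph.alpha i = Alph.alpha j ∧ S₂ ++ [Alph.alpha i] = B := by
          simpa using hsecond
        obtain rfl : i = j := by simpa using he
        subst hB
        have hr' : Realizable ([Alph.alpha i] ++ (M ++ Alph.alpha i :: S₂) ++ [Alph.alpha i]) := by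
          simpa using hr
        have := Realizable.concat i h1 hr'
        simpa using this
      | cons u U₀' =>
        obtain ⟨hu, hS2⟩ : Alph.alpha i = u ∧ S₂ ++ [Alph.alpha i] = U₀' ++ Alph.alpha j :: B := by
          simpa using hsecond
        subst hu
        rcases split_mid (X := S₂) (Y := [Alph.alpha i]) hS2 with
          ⟨B₁, hz, hB⟩ | ⟨U₁, hU₁, hw⟩
        · subst hB
          have hr' : Realizable ([Alph.alpha i] ++ (U₀' ++ Alph.alpha j :: (M ++ Alph.alpha j :: B₁)) ++ [Alph.alpha i]) := by
            simpa using hr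
          have := Realizable.concat i h1 hr'
          simpa using this
        · subst hU₁
          cases U₁ with
          | cons v U₂ => exfalso; simp_all
          | nil =>
            obtain ⟨he, hB⟩ : Alph.alpha i = Alph.alpha j ∧ [] = B := by simpa using hw
            obtain rfl : i = j := by simpa using he
            subst hB
            have hr' : Realizable ([Alph.alpha i] ++ (S₂ ++ Alph.alpha i :: M) ++ [Alph.alpha i]) := by
              simpa using hr
            have := Realizable.concat i h1 hr'
            simpa using this


/-- The string of vertex labels and edge labels along a walk given by its vertex list. -/
def labelStr {V : Type*} {k : ℕ} (lv : V → Fin k) (le : V → V → Alph k) :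
    List V → List (Alph k)
  | [] => []
  | [v] => [Alph.alpha (lv v)]
  | u :: v :: r => Alph.alpha (lv u) :: le u v :: labelStr lv le (v :: r)

/-- `(a,b)` is realizable with gap `(c,d)`: there are paths `P₁ : a → c`, `P₂ : d → b`,
the labels of `a`,`b` agree, the labels of `c`,`d` agree, and the concatenation of the
vertex/edge labels along `P₁` followed by `P₂` (identifying `c` with `d`) is realizable. -/
def RealizableWithGap {V : Type*} {k : ℕ} (A : V → V → Prop) (lv : V → Fin k)
    (le : V → V → Alph k) (a c d b : V) : Prop :=
  lv a = lv b ∧ lv c = lv d ∧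
    ∃ p q : List V,
      p.head? = some a ∧ p.getLast? = some c ∧ p.Chain' A ∧
      q.head? = some d ∧ q.getLast? = some b ∧ q.Chain' A ∧
      Realizable (labelStr lv le p ++ (labelStr lv le q).tail)


section LabelStr

variable {V : Type*} {k : ℕ} (lv : V → Fin k) (le : V → V → Alph k)

lemma labelStr_cons_head (v : V) (r : List V) :
    labelStr lv le (v :: r) = Alph.alpha (lv v) :: (labelStr lv le (v :: r)).tail := by
  cases r <;> simp [labelStr]

lemma labelStr_getLast? : ∀ (p : List V) (c : V), p.getLast? = some c →
    ∃ U, labelStr lv le p = U ++ [Alph.alpha (lv c)]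
  | [], c => by simp
  | [v], c => by
    intro h
    obtain rfl : v = c := by simpa using h
    exact ⟨[], rfl⟩
  | u :: v :: r, c => by
    intro h
    have h' : (v :: r).getLast? = some c := by simpa using h
    obtain ⟨U, hU⟩ := labelStr_getLast? (v :: r) c h'
    exact ⟨Alph.alpha (lv u) :: le u v :: U, by simp [labelStr, hU]⟩

lemma labelStr_append : ∀ (p t : List V) (c : V), p.getLast? = some c →
    labelStr lv le (p ++ t) = labelStr lv le p ++ (labelStr lv le (c :: t)).tail
  | [], t, c => by simp
  | [v], t, c => by
    intro h
    obtain rfl : v = c := by simpa using h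
    cases t <;> simp [labelStr]
  | u :: v :: r, t, c => by
    intro h
    have h' : (v :: r).getLast? = some c := by simpa using h
    have ih := labelStr_append (v :: r) t c h'
    simp only [List.cons_append] at ih ⊢
    simp [labelStr, ih]

end LabelStr

/-- The gap composition rule: if `(a,b)` is realizable with gap `(c,d)` and `(c,d)` is
realizable with gap `(e,f)`, then `(a,b)` is realizable with gap `(e,f)`. -/
theorem realizableWithGap_trans {V : Type*} {k : ℕ} (A : V → V → Prop)
    (lv : V → Fin k) (le : V → V → Alph k) (a b c d e f : V)
    (h₁ : RealizableWithGap A lv le a c d b)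
    (h₂ : RealizableWithGap A lv le c e f d) :
    RealizableWithGap A lv le a e f b := by
  obtain ⟨hab, hcd, p, q, hph, hpl, hpc, hqh, hql, hqc, hR1⟩ := h₁
  obtain ⟨hcd2, hef, p', q', hp'h, hp'l, hp'c, hq'h, hq'l, hq'c, hR2⟩ := h₂
  -- decompose the paths
  obtain ⟨t', rfl⟩ : ∃ t, p' = c :: t := by
    cases p' with
    | nil => simp at hp'h
    | cons x xs =>
      obtain rfl : x = c := by simpa using hp'h
      exact ⟨xs, rfl⟩
  obtain ⟨tq, rfl⟩ : ∃ t, q = d :: t := by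
    cases q with
    | nil => simp at hqh
    | cons x xs =>
      obtain rfl : x = d := by simpa using hqh
      exact ⟨xs, rfl⟩
  obtain ⟨tq', rfl⟩ : ∃ t, q' = f :: t := by
    cases q' with
    | nil => simp at hq'h
    | cons x xs =>
      obtain rfl : x = f := by simpa using hq'h
      exact ⟨xs, rfl⟩
  obtain ⟨tp, rfl⟩ : ∃ t, p = a :: t := by
    cases p with
    | nil => simp at hph
    | cons x xs =>
      obtain rfl : x = a := by simpa using hph
      exact ⟨xs, rfl⟩
  refine ⟨hab, hef, (a :: tp) ++ t', (f :: tq') ++ tq, ?_, ?_, ?_, ?_, ?_, ?_, ?_⟩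
  · simp
  · -- getLast? of the first joined path is e
    cases t' with
    | nil =>
      obtain rfl : c = e := by simpa using hp'l
      simpa using hpl
    | cons w r =>
      have h1 : (w :: r).getLast? = some e := by simpa using hp'l
      rw [List.getLast?_append, h1]
      rfl
  · -- chain of the first joined path
    have h1 := List.isChain_cons.mp hp'c
    refine List.IsChain.append hpc h1.2 ?_
    intro x hx y hy
    have hxc : c = x := by rw [hpl] at hx; simpa using hx
    exact hxc ▸ h1.1 y hy
  · simp
  · -- getLast? of the second joined path is b
    cases tq with
    | nil =>
      obtain rfl : d = b := by simpa using hql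
      simpa using hq'l
    | cons w r =>
      have h1 : (w :: r).getLast? = some b := by simpa using hql
      rw [List.getLast?_append, h1]
      rfl
  · -- chain of the second joined path
    have h1 := List.isChain_cons.mp hqc
    refine List.IsChain.append hq'c h1.2 ?_
    intro x hx y hy
    have hxc : d = x := by rw [hq'l] at hx; simpa using hx
    exact hxc ▸ h1.1 y hy
  · -- realizability of the combined label string
    have e1 : labelStr lv le ((a :: tp) ++ t')
        = labelStr lv le (a :: tp) ++ (labelStr lv le (c :: t')).tail :=
      labelStr_append lv le _ _ _ hpl
    have e2 : labelStr lv le ((f :: tq') ++ tq)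
        = labelStr lv le (f :: tq') ++ (labelStr lv le (d :: tq)).tail :=
      labelStr_append lv le _ _ _ hq'l
    have e3 : labelStr lv le (f :: tq')
        = Alph.alpha (lv f) :: (labelStr lv le (f :: tq')).tail :=
      labelStr_cons_head lv le f tq'
    have e4 : labelStr lv le (c :: t')
        = Alph.alpha (lv c) :: (labelStr lv le (c :: t')).tail :=
      labelStr_cons_head lv le c t'
    obtain ⟨U, hU⟩ := labelStr_getLast? lv le (a :: tp) c hpl
    -- the second realizable string ends with α (lv c)
    have hS2last : ∃ N, labelStr lv le (c :: t') ++ (labelStr lv le (f :: tq')).tail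
        = N ++ [Alph.alpha (lv c)] := by
      cases tq' with
      | nil =>
        obtain rfl : f = d := by simpa using hq'l
        obtain ⟨U', hU'⟩ := labelStr_getLast? lv le (c :: t') e hp'l
        refine ⟨U', ?_⟩
        have : lv e = lv c := by rw [hef, ← hcd2]
        simp [labelStr, hU', this]
      | cons w r =>
        obtain ⟨W, hW⟩ := labelStr_getLast? lv le (f :: w :: r) d hq'l
        cases W with
        | nil => exfalso; simp [labelStr] at hW
        | cons w₀ W' =>
          have htail : (labelStr lv le (f :: w :: r)).tail = W' ++ [Alph.alpha (lv d)] := by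
            rw [hW]; rfl
          exact ⟨labelStr lv le (c :: t') ++ W', by simp [htail, ← hcd2]⟩
    obtain ⟨N, hN⟩ := hS2last
    -- compare with the cons-form of the second string
    have hcons : Alph.alpha (lv c) ::
        ((labelStr lv le (c :: t')).tail ++ (labelStr lv le (f :: tq')).tail)
        = N ++ [Alph.alpha (lv c)] := by
      rw [← List.cons_append, ← e4]; exact hN
    cases N with
    | nil =>
      -- degenerate case: both gap-paths are trivial
      have h56 : (labelStr lv le (c :: t')).tail ++ (labelStr lv le (f :: tq')).tail = [] := by
        simpa using hcons
      obtain ⟨h5, h6⟩ := List.append_eq_nil_iff.mp h56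
      rw [e1, e2, e3, h5, h6]
      simpa using hR1
    | cons n N' =>
      obtain ⟨hn, hR⟩ : Alph.alpha (lv c) = n ∧
          (labelStr lv le (c :: t')).tail ++ (labelStr lv le (f :: tq')).tail
          = N' ++ [Alph.alpha (lv c)] := by simpa using hcons
      have hM : Realizable (Alph.alpha (lv c) :: (N' ++ [Alph.alpha (lv c)])) := by
        have : labelStr lv le (c :: t') ++ (labelStr lv le (f :: tq')).tail
            = Alph.alpha (lv c) :: (N' ++ [Alph.alpha (lv c)]) := by
          rw [e4, List.cons_append, hR]
        rw [← this]
        exact hR2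
      have hR1' : Realizable (U ++ Alph.alpha (lv c) :: (labelStr lv le (d :: tq)).tail) := by
        have : labelStr lv le (a :: tp) ++ (labelStr lv le (d :: tq)).tail
            = U ++ Alph.alpha (lv c) :: (labelStr lv le (d :: tq)).tail := by
          rw [hU]; simp
        rw [← this]; exact hR1
      have hins := realizable_insert hM (hR1') U ((labelStr lv le (d :: tq)).tail) rfl
      rw [e1, e2, e3]
      simp only [List.cons_append, List.tail_cons, hU]
      have eqn : U ++ [Alph.alpha (lv c)] ++ (labelStr lv le (c :: t')).tail ++
          ((labelStr lv le (f :: tq')).tail ++ (labelStr lv le (d :: tq)).tail)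
          = U ++ Alph.alpha (lv c) :: (N' ++ Alph.alpha (lv c) ::
              (labelStr lv le (d :: tq)).tail) := by
        calc U ++ [Alph.alpha (lv c)] ++ (labelStr lv le (c :: t')).tail ++
            ((labelStr lv le (f :: tq')).tail ++ (labelStr lv le (d :: tq)).tail)
            = U ++ [Alph.alpha (lv c)] ++ ((labelStr lv le (c :: t')).tail ++
              (labelStr lv le (f :: tq')).tail) ++ (labelStr lv le (d :: tq)).tail := by
              simp [List.append_assoc]
          _ = _ := by rw [hR]; simp
      rw [eqn]
      exact hins
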